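/- Let n ≥ 5 and let ρ = |W_n⟩⟨W_n| be the W-state projector. Then the number of Pauli strings with large expectation value is bounded: |{a ∈ (Fin n → Fin 4) : |⟨P_a⟩_ρ| > 3/4}| < 2^(3n/4). -/

import Mathlib

open Matrix Kronecker
open scoped ComplexOrder

noncomputable def pauli1 : Fin 4 → Matrix (Fin 2) (Fin 2) ℂ
  | 0 => !![1, 0; 0, 1]
  | 1 => !![0, 1; 1, 0]
  | 2 => !![0, -Complex.I; Complex.I, 0]
  | 3 => !![1, 0; 0, -1]

noncomputable def PauliOp {n : ℕ} (a : Fin n → Fin 4) :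
    Matrix (Fin n → Fin 2) (Fin n → Fin 2) ℂ :=
  Matrix.of fun z z' => ∏ i, pauli1 (a i) (z i) (z' i)

/-- The trace norm of a matrix: the trace of the positive semidefinite square root of `Aᴴ * A`. -/
noncomputable def traceNorm {m : Type*} [Fintype m] [DecidableEq m]
    (A : Matrix m m ℂ) : ℝ :=
  (((Matrix.posSemidef_conjTranspose_mul_self A).1.eigenvectorUnitary : Matrix m m ℂ) *
    diagonal (((↑) : ℝ → ℂ) ∘ (√·) ∘ (Matrix.posSemidef_conjTranspose_mul_self A).1.eigenvalues) *
    (star (Matrix.posSemidef_conjTranspose_mul_self A).1.eigenvectorUnitary : Matrix m m ℂ)).trace.re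

/-- A quantum state: positive semidefinite with unit trace. -/
structure IsState {m : Type*} [Fintype m] (ρ : Matrix m m ℂ) : Prop where
  posSemidef : ρ.PosSemidef
  trace_one : ρ.trace = 1

/-- Pauli expectation value `⟨P_a⟩_ρ`. -/
noncomputable def pExp {n : ℕ} (ρ : Matrix (Fin n → Fin 2) (Fin n → Fin 2) ℂ)
    (a : Fin n → Fin 4) : ℝ := ((PauliOp a * ρ).trace).re

/-- The purity `tr ρ²`. -/
noncomputable def purity {m : Type*} [Fintype m] (ρ : Matrix m m ℂ) : ℝ :=
  ((ρ * ρ).trace).re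

/-- The Pauli distribution `p_ρ`. -/
noncomputable def pDist {n : ℕ} (ρ : Matrix (Fin n → Fin 2) (Fin n → Fin 2) ℂ)
    (a : Fin n → Fin 4) : ℝ := (pExp ρ a) ^ 2 / (2 ^ n * purity ρ)

/-- The cumulative distribution function `F_ρ`. -/
noncomputable def cdf {n : ℕ} (ρ : Matrix (Fin n → Fin 2) (Fin n → Fin 2) ℂ)
    (ε : ℝ) : ℝ := ∑ a : Fin n → Fin 4, if (pExp ρ a) ^ 2 ≤ ε then pDist ρ a else 0

/-- The maximally entangled state `|Φ₀⟩`. -/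
noncomputable def Phi0 (n : ℕ) : (Fin n → Fin 2) × (Fin n → Fin 2) → ℂ :=
  fun p => if p.1 = p.2 then (↑(Real.sqrt (2 ^ n)))⁻¹ else 0

/-- The Bell state `|Φ_a⟩ = (1 ⊗ P_a)|Φ₀⟩`. -/
noncomputable def BellVec {n : ℕ} (a : Fin n → Fin 4) :
    (Fin n → Fin 2) × (Fin n → Fin 2) → ℂ :=
  ((1 : Matrix (Fin n → Fin 2) (Fin n → Fin 2) ℂ) ⊗ₖ PauliOp a).mulVec (Phi0 n)

/-- The Bell distribution `q_ρ(a) = ⟨Φ_a| ρ ⊗ ρ |Φ_a⟩`. -/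
noncomputable def qDist {n : ℕ} (ρ : Matrix (Fin n → Fin 2) (Fin n → Fin 2) ℂ)
    (a : Fin n → Fin 4) : ℝ :=
  (star (BellVec a) ⬝ᵥ ((ρ ⊗ₖ ρ).mulVec (BellVec a))).re

/-- The W state. -/
noncomputable def Wstate (n : ℕ) : (Fin n → Fin 2) → ℂ :=
  fun z => if (∑ i, (z i : ℕ)) = 1 then (↑(Real.sqrt n))⁻¹ else 0

/-- The W state projector `|W_n⟩⟨W_n|`. -/
noncomputable def Wproj (n : ℕ) : Matrix (Fin n → Fin 2) (Fin n → Fin 2) ℂ :=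
  Matrix.vecMulVec (Wstate n) (star (Wstate n))

-- auxiliary
def dvec {n : ℕ} (j : Fin n) : Fin n → Fin 2 := fun i => if i = j then 1 else 0

lemma dvec_inj {n : ℕ} : Function.Injective (dvec (n := n)) := by
  intro j k h
  have := congrFun h j
  simp [dvec] at this
  by_contra hne
  exact hne this

lemma wt_dvec {n : ℕ} (j : Fin n) : (∑ i, ((dvec j i : ℕ))) = 1 := by
  simp [dvec, apply_ite (fun x : Fin 2 => (x : ℕ))]


lemma fin2_cases (x : Fin 2) : x = 0 ∨ x = 1 := by omega

lemma weight_one_iff {n : ℕ} (z : Fin n → Fin 2) :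
    (∑ i, (z i : ℕ)) = 1 ↔ ∃ j, z = dvec j := by
  constructor
  · intro h
    have hex : ∃ j, z j = 1 := by
      by_contra hc
      push_neg at hc
      have hz : ∀ j, z j = 0 := fun j => (fin2_cases (z j)).resolve_right (hc j)
      simp [hz] at h
    obtain ⟨j, hj⟩ := hex
    refine ⟨j, funext fun i => ?_⟩
    unfold dvec
    by_cases hij : i = j
    · simpa [hij] using hj
    · rw [if_neg hij]
      by_contra hzi
      have hone : z i = 1 := (fin2_cases (z i)).resolve_left hzi
      have hsub : ({i, j} : Finset (Fin n)) ⊆ Finset.univ := Finset.subset_univ _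
      have h2 : (∑ k ∈ ({i, j} : Finset (Fin n)), (z k : ℕ)) ≤ ∑ k, (z k : ℕ) :=
        Finset.sum_le_sum_of_subset hsub
      rw [Finset.sum_pair hij, hone, hj, h] at h2
      omega
  · rintro ⟨j, rfl⟩; exact wt_dvec j

lemma sum_weight_one {n : ℕ} (f : (Fin n → Fin 2) → ℂ)
    (hf : ∀ z, (∑ i, (z i : ℕ)) ≠ 1 → f z = 0) :
    ∑ z, f z = ∑ j, f (dvec j) := by
  classical
  rw [← Finset.sum_subset (Finset.subset_univ (Finset.univ.image dvec))]
  · rw [Finset.sum_image (fun j _ k _ h => dvec_inj h)]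
  · intro z _ hz
    apply hf
    intro h1
    obtain ⟨j, rfl⟩ := (weight_one_iff z).mp h1
    exact hz (Finset.mem_image_of_mem _ (Finset.mem_univ j))

lemma Wstate_dvec {n : ℕ} (j : Fin n) :
    Wstate n (dvec j) = ((Real.sqrt n : ℝ) : ℂ)⁻¹ := by
  simp [Wstate, wt_dvec]

lemma trace_formula {n : ℕ} (hn : 0 < n) (a : Fin n → Fin 4) :
    (PauliOp a * Wproj n).trace
      = (n : ℂ)⁻¹ * ∑ j, ∑ k, ∏ i, pauli1 (a i) (dvec j i) (dvec k i) := by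
  classical
  have hcc : ((Real.sqrt n : ℝ) : ℂ)⁻¹ * ((Real.sqrt n : ℝ) : ℂ)⁻¹ = (n : ℂ)⁻¹ := by
    rw [← mul_inv, ← Complex.ofReal_mul, Real.mul_self_sqrt (by positivity)]
    norm_num
  have h1 : (PauliOp a * Wproj n).trace
      = ∑ z, ∑ z', PauliOp a z z' * (Wstate n z' * (starRingEnd ℂ) (Wstate n z)) := by
    simp [Matrix.trace, Matrix.diag, Matrix.mul_apply, Wproj, Matrix.vecMulVec_apply,
      Pi.star_apply]
  rw [h1]
  rw [sum_weight_one _ (fun z hz => by simp [Wstate, hz])]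
  have h2 : ∀ j : Fin n, (∑ z', PauliOp a (dvec j) z' * (Wstate n z' * (starRingEnd ℂ) (Wstate n (dvec j))))
      = ∑ k, PauliOp a (dvec j) (dvec k) * (n : ℂ)⁻¹ := by
    intro j
    rw [sum_weight_one _ (fun z hz => by simp [Wstate, hz])]
    refine Finset.sum_congr rfl fun k _ => ?_
    rw [Wstate_dvec, Wstate_dvec]
    congr 1
    rw [← hcc]
    congr 1
    rw [map_inv₀, Complex.conj_ofReal]
  simp only [h2]
  rw [Finset.mul_sum]
  refine Finset.sum_congr rfl fun j _ => ?_
  rw [Finset.mul_sum]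
  refine Finset.sum_congr rfl fun k _ => ?_
  rw [mul_comm]
  rfl

noncomputable def sgn : Fin 4 → ℝ := fun c => if c = 0 then 1 else if c = 3 then -1 else 0

lemma pauli03_00 {c : Fin 4} (h : c = 0 ∨ c = 3) : pauli1 c 0 0 = 1 := by
  rcases h with rfl | rfl <;> simp [pauli1]

lemma pauli03_11 {c : Fin 4} (h : c = 0 ∨ c = 3) : pauli1 c 1 1 = ((sgn c : ℝ) : ℂ) := by
  rcases h with rfl | rfl <;> simp [pauli1, sgn]

lemma pauli03_10 {c : Fin 4} (h : c = 0 ∨ c = 3) : pauli1 c 1 0 = 0 := by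
  rcases h with rfl | rfl <;> simp [pauli1]

lemma pauli03_01 {c : Fin 4} (h : c = 0 ∨ c = 3) : pauli1 c 0 1 = 0 := by
  rcases h with rfl | rfl <;> simp [pauli1]

lemma pauli12_00 {c : Fin 4} (h : c = 1 ∨ c = 2) : pauli1 c 0 0 = 0 := by
  rcases h with rfl | rfl <;> simp [pauli1]

lemma pauli12_11 {c : Fin 4} (h : c = 1 ∨ c = 2) : pauli1 c 1 1 = 0 := by
  rcases h with rfl | rfl <;> simp [pauli1]

lemma pauli_abs_le (c : Fin 4) (x y : Fin 2) : ‖pauli1 c x y‖ ≤ 1 := by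
  fin_cases c <;> fin_cases x <;> fin_cases y <;> simp [pauli1]

lemma dvec_self {n : ℕ} (j : Fin n) : dvec j j = 1 := by simp [dvec]
lemma dvec_ne {n : ℕ} {i j : Fin n} (h : i ≠ j) : dvec j i = 0 := by simp [dvec, h]

lemma caseA {n : ℕ} (hn : 0 < n) (a : Fin n → Fin 4) (h : ∀ i, a i = 0 ∨ a i = 3) :
    pExp (Wproj n) a = (∑ j, sgn (a j)) / n := by
  have hdiag : ∀ j : Fin n, (∏ i, pauli1 (a i) (dvec j i) (dvec j i)) = ((sgn (a j) : ℝ) : ℂ) := by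
    intro j
    rw [Finset.prod_eq_single j
      (fun i _ hij => by rw [dvec_ne hij, pauli03_00 (h i)])
      (fun hj => absurd (Finset.mem_univ j) hj)]
    rw [dvec_self, pauli03_11 (h j)]
  have hoff : ∀ j k : Fin n, j ≠ k → (∏ i, pauli1 (a i) (dvec j i) (dvec k i)) = 0 := by
    intro j k hjk
    exact Finset.prod_eq_zero (Finset.mem_univ j)
      (by rw [dvec_self, dvec_ne hjk, pauli03_10 (h j)])
  have htr : (PauliOp a * Wproj n).trace = (n : ℂ)⁻¹ * ∑ j, ((sgn (a j) : ℝ) : ℂ) := by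
    rw [trace_formula hn a]
    congr 1
    refine Finset.sum_congr rfl fun j _ => ?_
    rw [Finset.sum_eq_single j (fun k _ hkj => hoff j k (Ne.symm hkj))
      (fun hj => absurd (Finset.mem_univ j) hj), hdiag]
  unfold pExp
  rw [htr]
  have : ((n : ℂ)⁻¹ * ∑ j, ((sgn (a j) : ℝ) : ℂ)) = (((∑ j, sgn (a j)) / n : ℝ) : ℂ) := by
    push_cast
    ring
  rw [this, Complex.ofReal_re]

lemma caseB {n : ℕ} (hn : 0 < n) (a : Fin n → Fin 4)
    (hex : ∃ i₀, a i₀ = 1 ∨ a i₀ = 2) :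
    |pExp (Wproj n) a| ≤ 2 / n := by
  classical
  obtain ⟨i₀, hi₀⟩ := hex
  set T : Fin n × Fin n → ℂ :=
    fun p => ∏ i, pauli1 (a i) (dvec p.1 i) (dvec p.2 i) with hT
  -- nonzero terms structure
  have claim2 : ∀ j k : Fin n, T (j, k) ≠ 0 →
      j ≠ k ∧ (a j = 1 ∨ a j = 2) ∧ (a k = 1 ∨ a k = 2) ∧
      ∀ i, (a i = 1 ∨ a i = 2) → i = j ∨ i = k := by
    intro j k hTne
    have hjk : j ≠ k := by
      rintro rfl
      apply hTne
      by_cases hij : i₀ = j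
      · exact Finset.prod_eq_zero (Finset.mem_univ i₀)
          (by rw [hij, dvec_self]; exact pauli12_11 (hij ▸ hi₀))
      · exact Finset.prod_eq_zero (Finset.mem_univ i₀)
          (by rw [dvec_ne hij]; exact pauli12_00 hi₀)
    refine ⟨hjk, ?_, ?_, ?_⟩
    · by_contra hj
      have haj : a j = 0 ∨ a j = 3 := by omega
      exact hTne (Finset.prod_eq_zero (Finset.mem_univ j)
        (by rw [dvec_self, dvec_ne hjk]; exact pauli03_10 haj))
    · by_contra hk
      have hak : a k = 0 ∨ a k = 3 := by omega
      exact hTne (Finset.prod_eq_zero (Finset.mem_univ k)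
        (by rw [dvec_self, dvec_ne (Ne.symm hjk)]; exact pauli03_01 hak))
    · intro i hai
      by_contra hi
      push_neg at hi
      exact hTne (Finset.prod_eq_zero (Finset.mem_univ i)
        (by rw [dvec_ne hi.1, dvec_ne hi.2]; exact pauli12_00 hai))
  have habsT : ∀ p, ‖T p‖ ≤ 1 := by
    intro p
    rw [hT]
    simp only
    rw [norm_prod]
    exact Finset.prod_le_one (fun i _ => norm_nonneg _)
      (fun i _ => pauli_abs_le _ _ _)
  -- the set of nonzero terms has at most 2 elements
  set P : Finset (Fin n × Fin n) := Finset.univ.filter (fun p => T p ≠ 0) with hP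
  have hPcard : P.card ≤ 2 := by
    rcases Finset.eq_empty_or_nonempty P with he | ⟨⟨p, q⟩, hpq⟩
    · simp [he]
    · have hpq' : T (p, q) ≠ 0 := (Finset.mem_filter.mp hpq).2
      obtain ⟨hpqne, hap, haq, hsub⟩ := claim2 p q hpq'
      have : P ⊆ {(p, q), (q, p)} := by
        intro ⟨j, k⟩ hjk
        have hjk' : T (j, k) ≠ 0 := (Finset.mem_filter.mp hjk).2
        obtain ⟨hjkne, haj, hak, hsub'⟩ := claim2 j k hjk'
        have hj : j = p ∨ j = q := hsub j haj
        have hk : k = p ∨ k = q := hsub k hak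
        simp only [Finset.mem_insert, Finset.mem_singleton, Prod.mk.injEq]
        rcases hj with rfl | rfl
        · rcases hk with rfl | rfl
          · exact absurd rfl hjkne
          · exact Or.inl ⟨rfl, rfl⟩
        · rcases hk with rfl | rfl
          · exact Or.inr ⟨rfl, rfl⟩
          · exact absurd rfl hjkne
      calc P.card ≤ ({(p, q), (q, p)} : Finset (Fin n × Fin n)).card :=
              Finset.card_le_card this
        _ ≤ 2 := Finset.card_insert_le _ _ |>.trans (by simp)
  have hsum : ∑ p : Fin n × Fin n, ‖T p‖ ≤ 2 := by
    have h1 : ∑ p : Fin n × Fin n, ‖T p‖ = ∑ p ∈ P, ‖T p‖ := by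
      refine (Finset.sum_subset (Finset.filter_subset _ _) ?_).symm
      intro p _ hp
      rw [Finset.mem_filter] at hp
      push_neg at hp
      rw [hp (Finset.mem_univ p), norm_zero]
    rw [h1]
    calc ∑ p ∈ P, ‖T p‖ ≤ ∑ p ∈ P, 1 :=
          Finset.sum_le_sum fun p _ => habsT p
      _ = P.card := by simp
      _ ≤ 2 := by exact_mod_cast hPcard
  -- assemble
  have htr : (PauliOp a * Wproj n).trace = (n : ℂ)⁻¹ * ∑ p : Fin n × Fin n, T p := by
    rw [trace_formula hn a, Fintype.sum_prod_type]
  have habs : ‖(PauliOp a * Wproj n).trace‖ ≤ 2 / n := by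
    rw [htr, norm_mul, norm_inv]
    have h2 : ‖∑ p : Fin n × Fin n, T p‖ ≤ 2 :=
      le_trans (norm_sum_le _ _) hsum
    have h3 : ‖(n : ℂ)‖ = n := by
      simp [Complex.norm_natCast]
    rw [h3, div_eq_inv_mul]
    exact mul_le_mul_of_nonneg_left h2 (by positivity)
  calc |pExp (Wproj n) a| ≤ ‖(PauliOp a * Wproj n).trace‖ :=
        Complex.abs_re_le_norm _
    _ ≤ 2 / n := habs

lemma main_char {n : ℕ} (hn : 5 ≤ n) (a : Fin n → Fin 4)
    (h : 3 / 4 < |pExp (Wproj n) a|) :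
    (∀ i, a i = 0 ∨ a i = 3) ∧ 3 * (n : ℝ) / 4 < |∑ j, sgn (a j)| := by
  have hn0 : 0 < n := by omega
  have hnR : (0 : ℝ) < n := by exact_mod_cast hn0
  have hall : ∀ i, a i = 0 ∨ a i = 3 := by
    by_contra hc
    push_neg at hc
    obtain ⟨i₀, h0, h3⟩ := hc
    have h12 : a i₀ = 1 ∨ a i₀ = 2 := by omega
    have hB := caseB hn0 a ⟨i₀, h12⟩
    have h5 : (5 : ℝ) ≤ n := by exact_mod_cast hn
    have : (2 : ℝ) / n ≤ 2 / 5 := by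
      apply div_le_div_of_nonneg_left (by norm_num) (by norm_num) h5
    linarith
  refine ⟨hall, ?_⟩
  rw [caseA hn0 a hall, abs_div, abs_of_pos hnR] at h
  rw [lt_div_iff₀ hnR] at h
  linarith

noncomputable def gw : Fin 4 → ℝ :=
  fun c => if c = 0 then Real.sqrt 7 else if c = 3 then (Real.sqrt 7)⁻¹ else 0
noncomputable def hw : Fin 4 → ℝ :=
  fun c => if c = 0 then (Real.sqrt 7)⁻¹ else if c = 3 then Real.sqrt 7 else 0

lemma sqrt7_pos : (0 : ℝ) < Real.sqrt 7 := Real.sqrt_pos.mpr (by norm_num)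
lemma sqrt7_gt_one : (1 : ℝ) < Real.sqrt 7 := by
  rw [show (1:ℝ) = Real.sqrt 1 by simp]
  exact Real.sqrt_lt_sqrt (by norm_num) (by norm_num)

lemma gw_nonneg (c : Fin 4) : 0 ≤ gw c := by
  unfold gw; split_ifs <;> positivity
lemma hw_nonneg (c : Fin 4) : 0 ≤ hw c := by
  unfold hw; split_ifs <;> positivity

lemma gw_eq {c : Fin 4} (h : c = 0 ∨ c = 3) : gw c = Real.sqrt 7 ^ (sgn c) := by
  rcases h with rfl | rfl <;>
    simp [gw, sgn, Real.rpow_neg_one, Real.rpow_one]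
lemma hw_eq {c : Fin 4} (h : c = 0 ∨ c = 3) : hw c = Real.sqrt 7 ^ (-sgn c) := by
  rcases h with rfl | rfl <;>
    simp [hw, sgn, Real.rpow_neg_one, Real.rpow_one]

lemma prod_gw {n : ℕ} (a : Fin n → Fin 4) (h : ∀ i, a i = 0 ∨ a i = 3) :
    ∏ i, gw (a i) = Real.sqrt 7 ^ (∑ j, sgn (a j)) := by
  rw [Real.rpow_sum_of_pos sqrt7_pos]
  exact Finset.prod_congr rfl fun i _ => gw_eq (h i)

lemma prod_hw {n : ℕ} (a : Fin n → Fin 4) (h : ∀ i, a i = 0 ∨ a i = 3) :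
    ∏ i, hw (a i) = Real.sqrt 7 ^ (-∑ j, sgn (a j)) := by
  rw [← Finset.sum_neg_distrib, Real.rpow_sum_of_pos sqrt7_pos]
  exact Finset.prod_congr rfl fun i _ => hw_eq (h i)

lemma sum_prod_gw {n : ℕ} :
    ∑ a : Fin n → Fin 4, ∏ i, gw (a i) = (Real.sqrt 7 + (Real.sqrt 7)⁻¹) ^ n := by
  rw [← Fintype.piFinset_univ, ← Finset.prod_univ_sum]
  have : ∑ c : Fin 4, gw c = Real.sqrt 7 + (Real.sqrt 7)⁻¹ := by
    rw [Fin.sum_univ_four]; simp [gw]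
  rw [this, Finset.prod_const, Finset.card_univ, Fintype.card_fin]

lemma sum_prod_hw {n : ℕ} :
    ∑ a : Fin n → Fin 4, ∏ i, hw (a i) = (Real.sqrt 7 + (Real.sqrt 7)⁻¹) ^ n := by
  rw [← Fintype.piFinset_univ, ← Finset.prod_univ_sum]
  have : ∑ c : Fin 4, hw c = Real.sqrt 7 + (Real.sqrt 7)⁻¹ := by
    rw [Fin.sum_univ_four]; simp [hw]; ring
  rw [this, Finset.prod_const, Finset.card_univ, Fintype.card_fin]

lemma nat_ineq : ∀ n : ℕ, 5 ≤ n → 2 ^ (8 + 18 * n) < 7 ^ (7 * n) := by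
  intro n hn
  induction n, hn using Nat.le_induction with
  | base => norm_num
  | succ m hm ih =>
    rw [show 8 + 18 * (m + 1) = (8 + 18 * m) + 18 from by ring,
      show 7 * (m + 1) = 7 * m + 7 from by ring,
      pow_add 2 (8 + 18 * m) 18, pow_add 7 (7 * m) 7]
    have h3 : (2:ℕ) ^ 18 ≤ 7 ^ 7 := by norm_num
    exact Nat.mul_lt_mul_of_lt_of_le ih h3 (by positivity)

lemma sqrt7_mul_self : Real.sqrt 7 * Real.sqrt 7 = 7 :=
  Real.mul_self_sqrt (by norm_num)

lemma real_ineq {n : ℕ} (hn : 5 ≤ n) :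
    2 * (Real.sqrt 7 + (Real.sqrt 7)⁻¹) ^ n / (Real.sqrt 7 ^ ((3 * (n : ℝ)) / 4)) <
      (2 : ℝ) ^ ((3 * (n : ℝ)) / 4) := by
  have h7 : (0:ℝ) < Real.sqrt 7 := sqrt7_pos
  set r : ℝ := (3 * (n : ℝ)) / 4 with hr
  have hμ : (0 : ℝ) < Real.sqrt 7 ^ r := Real.rpow_pos_of_pos h7 r
  have hR : (0 : ℝ) < (2:ℝ) ^ r := Real.rpow_pos_of_pos (by norm_num) r
  apply lt_of_pow_lt_pow_left₀ 8 (le_of_lt hR)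
  have hb : Real.sqrt 7 + (Real.sqrt 7)⁻¹ = 8 / Real.sqrt 7 := by
    rw [eq_div_iff (ne_of_gt h7), add_mul, inv_mul_cancel₀ (ne_of_gt h7), sqrt7_mul_self]
    norm_num
  have hμ8 : (Real.sqrt 7 ^ r) ^ (8:ℕ) = 7 ^ (3 * n) := by
    rw [← Real.rpow_natCast (Real.sqrt 7 ^ r) 8, ← Real.rpow_mul (le_of_lt h7)]
    have : r * (8:ℕ) = ((6 * n : ℕ) : ℝ) := by push_cast; rw [hr]; ring
    rw [this, Real.rpow_natCast]
    rw [show 6 * n = 2 * (3 * n) from by ring, pow_mul, sq, sqrt7_mul_self]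
  have hR8 : ((2:ℝ) ^ r) ^ (8:ℕ) = 2 ^ (6 * n) := by
    rw [← Real.rpow_natCast ((2:ℝ) ^ r) 8, ← Real.rpow_mul (by norm_num : (0:ℝ) ≤ 2)]
    have : r * (8:ℕ) = ((6 * n : ℕ) : ℝ) := by push_cast; rw [hr]; ring
    rw [this, Real.rpow_natCast]
  have hbn8 : ((Real.sqrt 7 + (Real.sqrt 7)⁻¹) ^ n) ^ (8:ℕ) = 8 ^ (8 * n) / 7 ^ (4 * n) := by
    rw [hb, div_pow, div_pow, ← pow_mul, ← pow_mul,
      show n * 8 = 8 * n from by ring]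
    congr 1
    rw [show 8 * n = 2 * (4 * n) from by ring, pow_mul, sq, sqrt7_mul_self]
  rw [div_pow, mul_pow, hμ8, hR8, hbn8]
  rw [div_lt_iff₀ (by positivity : (0:ℝ) < 7 ^ (3 * n))]
  have key : (2:ℝ) ^ (8 + 18 * n) < 7 ^ (7 * n) := by
    exact_mod_cast Nat.cast_lt.mpr (nat_ineq n hn)
  rw [show (2:ℝ) ^ (8:ℕ) * (8 ^ (8 * n) / 7 ^ (4 * n)) = 2 ^ (8:ℕ) * 8 ^ (8 * n) / 7 ^ (4 * n) from by ring,
    div_lt_iff₀ (by positivity : (0:ℝ) < 7 ^ (4 * n))]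
  calc (2:ℝ) ^ (8:ℕ) * 8 ^ (8 * n)
      = 2 ^ (8 + 24 * n) := by
        rw [pow_add]
        congr 1
        rw [show (8:ℝ) = 2 ^ 3 from by norm_num, ← pow_mul,
          show 3 * (8 * n) = 24 * n from by ring]
    _ = 2 ^ (8 + 18 * n) * 2 ^ (6 * n) := by
        rw [← pow_add]
        congr 1
        ring
    _ < 7 ^ (7 * n) * 2 ^ (6 * n) := by
        apply mul_lt_mul_of_pos_right key (by positivity)
    _ = 2 ^ (6 * n) * 7 ^ (3 * n) * 7 ^ (4 * n) := by
        rw [mul_comm, mul_assoc, ← pow_add]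
        congr 2
        ring


/-- For `n ≥ 5` and `ρ = |W_n⟩⟨W_n|`,
`|{a : |⟨P_a⟩_ρ| > 3/4}| < 2^(3n/4)`. -/
theorem stmt_9 {n : ℕ} (hn : 5 ≤ n) :
    (({a : Fin n → Fin 4 | 3 / 4 < |pExp (Wproj n) a|}.ncard : ℝ))
      < (2 : ℝ) ^ ((3 * (n : ℝ)) / 4) := by
  classical
  set A : Finset (Fin n → Fin 4) :=
    Finset.univ.filter (fun a => 3 / 4 < |pExp (Wproj n) a|) with hA
  have hset : {a : Fin n → Fin 4 | 3 / 4 < |pExp (Wproj n) a|} = ↑A := by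
    ext a; simp [hA]
  rw [hset, Set.ncard_coe_finset]
  set μ : ℝ := Real.sqrt 7 ^ ((3 * (n : ℝ)) / 4) with hμdef
  have hμ : 0 < μ := Real.rpow_pos_of_pos sqrt7_pos _
  set w : (Fin n → Fin 4) → ℝ :=
    fun a => ((∏ i, gw (a i)) + (∏ i, hw (a i))) / μ with hwdef
  have hw0 : ∀ a, 0 ≤ w a := by
    intro a
    apply div_nonneg _ (le_of_lt hμ)
    have h1 : 0 ≤ ∏ i, gw (a i) := Finset.prod_nonneg fun i _ => gw_nonneg _
    have h2 : 0 ≤ ∏ i, hw (a i) := Finset.prod_nonneg fun i _ => hw_nonneg _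
    linarith
  have hw1 : ∀ a ∈ A, (1 : ℝ) ≤ w a := by
    intro a ha
    rw [hA, Finset.mem_filter] at ha
    obtain ⟨hall, ht⟩ := main_char hn a ha.2
    set t : ℝ := ∑ j, sgn (a j) with htdef
    rw [hwdef]
    simp only
    rw [prod_gw a hall, prod_hw a hall]
    rw [le_div_iff₀ hμ, one_mul]
    have h1 : μ < Real.sqrt 7 ^ |t| := by
      rw [hμdef]
      exact (Real.rpow_lt_rpow_left_iff sqrt7_gt_one).mpr ht
    have h2 : Real.sqrt 7 ^ |t| ≤ Real.sqrt 7 ^ t + Real.sqrt 7 ^ (-t) := by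
      rcases abs_cases t with ⟨he, _⟩ | ⟨he, _⟩
      · rw [he]
        have : 0 < Real.sqrt 7 ^ (-t) := Real.rpow_pos_of_pos sqrt7_pos _
        linarith
      · rw [he]
        have : 0 < Real.sqrt 7 ^ t := Real.rpow_pos_of_pos sqrt7_pos _
        linarith
    linarith
  have hcard : (A.card : ℝ) ≤ ∑ a ∈ A, w a := by
    calc (A.card : ℝ) = ∑ a ∈ A, (1 : ℝ) := by rw [Finset.sum_const]; simp
      _ ≤ ∑ a ∈ A, w a := Finset.sum_le_sum hw1
  have hsub : ∑ a ∈ A, w a ≤ ∑ a : Fin n → Fin 4, w a :=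
    Finset.sum_le_sum_of_subset_of_nonneg (Finset.subset_univ A)
      (fun a _ _ => hw0 a)
  have htot : ∑ a : Fin n → Fin 4, w a
      = 2 * (Real.sqrt 7 + (Real.sqrt 7)⁻¹) ^ n / μ := by
    rw [hwdef]
    simp only
    rw [← Finset.sum_div, Finset.sum_add_distrib, sum_prod_gw, sum_prod_hw]
    ring
  calc (A.card : ℝ) ≤ ∑ a : Fin n → Fin 4, w a := le_trans hcard hsub
    _ = 2 * (Real.sqrt 7 + (Real.sqrt 7)⁻¹) ^ n / μ := htot
    _ < (2 : ℝ) ^ ((3 * (n : ℝ)) / 4) := real_ineq hn
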